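/- Let h_SB, h_SC, h_CB, h_CD, p_S, σ_B², σ_C², σ_D², P_C > 0, β ≥ 0, λ ∈ [0,1]. Define R_B(α, p) = log₂(1 + α·p·h_CB/(p_S·h_SB + (1−α)·p·h_CB + σ_B²)), R_SC(p) = log₂(1 + p_S·h_SC/(β·p^λ + σ_C²)), R_{CD,S}(α, p) = log₂(1 + (1−α)·p·h_CD/σ_D²), and R_min(α, p) = min(R_B(α, p), R_SC(p), R_{CD,S}(α, p)) on the compact set [0,1] × [0, P_C]. Let p̄_C be the unique positive root of F₂(x) = h_CD·β·x^{1+λ} + h_CD·σ_C²·x − σ_D²·p_S·h_SC. If p̄_C ≥ P_C, then every maximizer (α*, p*) of R_min over [0,1] × [0, P_C] satisfies R_SC(p*) ≥ R_{CD,S}(α*, p*). -/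
import Mathlib


open Set Real

/-- Lemma 2, case `p̄_C ≥ P_C`: every maximizer of the minimum
achievable rate satisfies `R_SC(p*) ≥ R_{CD,S}(α*, p*)`. -/
theorem maxmin_rate_case_two
    (hSB hSC hCB hCD pS σB2 σC2 σD2 PC β lam pbar : ℝ)
    (hhSB : 0 < hSB) (hhSC : 0 < hSC) (hhCB : 0 < hCB) (hhCD : 0 < hCD)
    (hpS : 0 < pS) (hσB : 0 < σB2) (hσC : 0 < σC2) (hσD : 0 < σD2) (hPC : 0 < PC)
    (hβ : 0 ≤ β) (hlam : lam ∈ Icc (0 : ℝ) 1)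
    (hpbar_pos : 0 < pbar)
    (hpbar_root : hCD * β * pbar ^ (1 + lam) + hCD * σC2 * pbar - σD2 * pS * hSC = 0)
    (hpbar_ge : PC ≤ pbar) :
    let RB : ℝ → ℝ → ℝ := fun α p =>
      logb 2 (1 + α * p * hCB / (pS * hSB + (1 - α) * p * hCB + σB2))
    let RSC : ℝ → ℝ := fun p => logb 2 (1 + pS * hSC / (β * p ^ lam + σC2))
    let RCDS : ℝ → ℝ → ℝ := fun α p => logb 2 (1 + (1 - α) * p * hCD / σD2)
    let Rmin : ℝ → ℝ → ℝ := fun α p => min (RB α p) (min (RSC p) (RCDS α p))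
    ∀ αs ps : ℝ, αs ∈ Icc (0 : ℝ) 1 → ps ∈ Icc 0 PC →
      (∀ α ∈ Icc (0 : ℝ) 1, ∀ p ∈ Icc 0 PC, Rmin α p ≤ Rmin αs ps) →
      RCDS αs ps ≤ RSC ps := by
  intro RB RSC RCDS Rmin αs ps hαs hps _
  obtain ⟨hα0, hα1⟩ := hαs
  obtain ⟨hps0, hpsPC⟩ := hps
  obtain ⟨hlam0, hlam1⟩ := hlam
  have hpsbar : ps ≤ pbar := hpsPC.trans hpbar_ge
  have hlamsum : (1 : ℝ) + lam ≠ 0 := by positivity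
  have hrp : ps ^ lam ≥ 0 := Real.rpow_nonneg hps0 lam
  have hden : 0 < β * ps ^ lam + σC2 := by positivity
  -- F₂(ps) ≤ F₂(pbar) = 0
  have hmono : hCD * β * ps ^ (1 + lam) + hCD * σC2 * ps ≤ σD2 * pS * hSC := by
    have h1 : ps ^ (1 + lam) ≤ pbar ^ (1 + lam) :=
      Real.rpow_le_rpow hps0 hpsbar (by positivity)
    have h2 := mul_le_mul_of_nonneg_left h1 (by positivity : (0:ℝ) ≤ hCD * β)
    have h3 := mul_le_mul_of_nonneg_left hpsbar (by positivity : (0:ℝ) ≤ hCD * σC2)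
    linarith
  -- ps * ps^lam = ps^(1+lam)
  have hsplit : ps ^ (1 + lam) = ps * ps ^ lam := by
    rw [Real.rpow_add' hps0 hlamsum, Real.rpow_one]
  -- key inequality on the SNRs
  have hkey : (1 - αs) * ps * hCD / σD2 ≤ pS * hSC / (β * ps ^ lam + σC2) := by
    rw [div_le_div_iff₀ hσD hden]
    have h2 : (1 - αs) * ps * hCD ≤ ps * hCD := by
      nlinarith [mul_nonneg (mul_nonneg hα0 hps0) hhCD.le]
    have h3 := mul_le_mul_of_nonneg_right h2 hden.le
    have h4 : ps * hCD * (β * ps ^ lam + σC2) = hCD * β * ps ^ (1 + lam) + hCD * σC2 * ps := by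
      rw [hsplit]; ring
    linarith
  have hpos : 0 < 1 + (1 - αs) * ps * hCD / σD2 := by
    have : 0 ≤ (1 - αs) * ps * hCD / σD2 :=
      div_nonneg (mul_nonneg (mul_nonneg (by linarith) hps0) hhCD.le) hσD.le
    linarith
  exact Real.logb_le_logb_of_le (by norm_num : (1:ℝ) < 2) hpos (by linarith)
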